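/- Fix m > 0. The derivative with respect to C of C ↦ p_C(γ)·γ is independent of C and equals q(γ) = ((m+2)/(m+1)²)·γ⁴ − ((m²+3m+3)/(m+1)²)·γ³ + γ, which factors as ((m+2)/(m+1)²)·(γ + (m+1)/(m+2))·γ·(γ − 1)·(γ − (m+1)). Moreover q(γ) < 0 for all γ ∈ (1, m+1), and q(1) = q(m+1) = 0. -/

import Mathlib

open Set Filter

/-- The coefficient `A(C)` from the paper (depending on `m`). -/
noncomputable def Acoef (m C : ℝ) : ℝ :=
  3 * C / m * (1 - 1 / (m + 1) ^ 2) - 6 / m * (1 + 1 / (m + 1) ^ 2)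

/-- The coefficient `B(C)` from the paper (depending on `m`). -/
noncomputable def Bcoef (m C : ℝ) : ℝ :=
  -2 * C * (1 + 1 / m - 1 / (m * (m + 1) ^ 2)) + 4 * (1 + 1 / m + 1 / (m * (m + 1) ^ 2))

/-- The polynomial `p_C(γ) = A(C)·γ³/3 + B(C)·γ²/2 + C`. -/
noncomputable def pC (m C γ : ℝ) : ℝ :=
  Acoef m C * γ ^ 3 / 3 + Bcoef m C * γ ^ 2 / 2 + C

/-- The polynomial `q(γ) = ((m+2)/(m+1)²)·γ⁴ − ((m²+3m+3)/(m+1)²)·γ³ + γ`. -/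
noncomputable def qPoly (m γ : ℝ) : ℝ :=
  (m + 2) / (m + 1) ^ 2 * γ ^ 4 - (m ^ 2 + 3 * m + 3) / (m + 1) ^ 2 * γ ^ 3 + γ

/-- `Q(γ) = ∫₁^γ q(y) dy`. -/
noncomputable def QPoly (m γ : ℝ) : ℝ := ∫ y in (1 : ℝ)..γ, qPoly m y

/-- Lemma 3.2.2: the `C`-derivative of `C ↦ p_C(γ)·γ` is independent of `C` and equals
`q(γ)`, which factors as `((m+2)/(m+1)²)·(γ + (m+1)/(m+2))·γ·(γ−1)·(γ−(m+1))`;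
moreover `q < 0` on `(1, m+1)` and `q(1) = q(m+1) = 0`. -/
theorem stmt10 (m : ℝ) (hm : 0 < m) :
    (∀ C γ : ℝ, HasDerivAt (fun c => pC m c γ * γ) (qPoly m γ) C) ∧
    (∀ γ : ℝ, qPoly m γ =
      (m + 2) / (m + 1) ^ 2 * (γ + (m + 1) / (m + 2)) * γ * (γ - 1) * (γ - (m + 1))) ∧
    (∀ γ ∈ Set.Ioo (1 : ℝ) (m + 1), qPoly m γ < 0) ∧
    qPoly m 1 = 0 ∧ qPoly m (m + 1) = 0 := by
  have hm0 : m ≠ 0 := ne_of_gt hm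
  have hm1 : m + 1 ≠ 0 := by positivity
  have hm2 : m + 2 ≠ 0 := by positivity
  have hfact : ∀ γ : ℝ, qPoly m γ =
      (m + 2) / (m + 1) ^ 2 * (γ + (m + 1) / (m + 2)) * γ * (γ - 1) * (γ - (m + 1)) := by
    intro γ
    unfold qPoly
    field_simp
    ring
  refine ⟨?_, hfact, ?_, ?_, ?_⟩
  · intro C γ
    have key : (fun c => pC m c γ * γ) =
        fun c => qPoly m γ * c +
          ((-6 / m * (1 + 1 / (m + 1) ^ 2)) * γ ^ 3 / 3 +
            (4 * (1 + 1 / m + 1 / (m * (m + 1) ^ 2))) * γ ^ 2 / 2) * γ := by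
      funext c
      unfold pC Acoef Bcoef qPoly
      field_simp
      ring
    rw [key]
    simpa using ((hasDerivAt_id C).const_mul (qPoly m γ)).add_const
      (((-6 / m * (1 + 1 / (m + 1) ^ 2)) * γ ^ 3 / 3 +
        (4 * (1 + 1 / m + 1 / (m * (m + 1) ^ 2))) * γ ^ 2 / 2) * γ)
  · intro γ hγ
    rw [hfact γ]
    have h1 : (0:ℝ) < (m + 2) / (m + 1) ^ 2 := by positivity
    have h2 : (0:ℝ) < γ + (m + 1) / (m + 2) := by
      have : (0:ℝ) < (m + 1) / (m + 2) := by positivity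
      linarith [hγ.1]
    have h3 : (0:ℝ) < γ := by linarith [hγ.1]
    have h4 : (0:ℝ) < γ - 1 := by linarith [hγ.1]
    have h5 : γ - (m + 1) < 0 := by linarith [hγ.2]
    have := mul_pos (mul_pos (mul_pos h1 h2) h3) h4
    exact mul_neg_of_pos_of_neg this h5
  · rw [hfact]; ring
  · rw [hfact]; ring
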